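/- For a prime p, a positive integer n, and a quadratic form Q over ℚ_p in n variables, the quotient set R(Q(ℤ^n)) is dense in ℚ_p if and only if R(Q(ℤ_p^n)) is dense in ℚ_p. -/

import Mathlib

def quotSet {K : Type*} [DivisionRing K] (A : Set K) : Set K :=
  {x | ∃ a ∈ A, ∃ b ∈ A, b ≠ 0 ∧ x = a / b}

lemma quotSet_mono {K : Type*} [DivisionRing K] {A B : Set K} (h : A ⊆ B) :
    quotSet A ⊆ quotSet B := by
  rintro x ⟨a, ha, b, hb, hb0, rfl⟩
  exact ⟨a, h ha, b, h hb, hb0, rfl⟩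

lemma quotSet_subset_closure {K : Type*} [NormedDivisionRing K] {A B : Set K}
    (hBA : B ⊆ closure A) : quotSet B ⊆ closure (quotSet A) := by
  rintro x ⟨a, ha, b, hb, hb0, rfl⟩
  have ha' : a ∈ closure A := hBA ha
  have hb' : b ∈ closure (A \ {0}) := by
    have : closure A ⊆ closure (A \ {0}) ∪ {0} := by
      refine closure_minimal ?_ (IsClosed.union isClosed_closure isClosed_singleton)
      intro y hy
      by_cases hy0 : y = 0
      · exact Or.inr hy0
      · exact Or.inl (subset_closure ⟨hy, hy0⟩)
    rcases this (hBA hb) with h | h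
    · exact h
    · exact absurd h hb0
  rw [mem_closure_iff_seq_limit] at ha' hb'
  obtain ⟨u, hu, hua⟩ := ha'
  obtain ⟨w, hw, hwb⟩ := hb'
  rw [mem_closure_iff_seq_limit]
  refine ⟨fun k => u k / w k, fun k => ⟨u k, hu k, w k, (hw k).1, (hw k).2, rfl⟩, ?_⟩
  exact hua.div hwb hb0

lemma dense_quot_iff {K : Type*} [NormedDivisionRing K] {A B : Set K}
    (hAB : A ⊆ B) (hBA : B ⊆ closure A) :
    Dense (quotSet A) ↔ Dense (quotSet B) := by
  constructor
  · exact fun h => h.mono (quotSet_mono hAB)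
  · intro h
    have : closure (quotSet B) ⊆ closure (quotSet A) :=
      closure_minimal (quotSet_subset_closure hBA) isClosed_closure
    intro x
    exact this (h x)

theorem stmt1 (p : ℕ) [Fact p.Prime] (n : ℕ) (hn : 0 < n)
    (Q : QuadraticForm ℚ_[p] (Fin n → ℚ_[p])) :
    Dense (quotSet {y : ℚ_[p] | ∃ v : Fin n → ℤ, Q (fun i => (v i : ℚ_[p])) = y}) ↔
    Dense (quotSet {y : ℚ_[p] | ∃ v : Fin n → ℤ_[p], Q (fun i => (v i : ℚ_[p])) = y}) := by
  set A : Set ℚ_[p] := {y | ∃ v : Fin n → ℤ, Q (fun i => (v i : ℚ_[p])) = y}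
  set B : Set ℚ_[p] := {y | ∃ v : Fin n → ℤ_[p], Q (fun i => (v i : ℚ_[p])) = y}
  have hAB : A ⊆ B := by
    rintro y ⟨v, rfl⟩
    exact ⟨fun i => (v i : ℤ_[p]), by norm_cast⟩
  -- continuity of Q
  have h2 : Invertible (2 : ℚ_[p]) := invertibleOfNonzero two_ne_zero
  have hc : Continuous fun v : Fin n → ℚ_[p] => Q v := by
    set Bl := QuadraticMap.associated (R := ℚ_[p]) Q with hBl
    have hQ : ∀ v : Fin n → ℚ_[p],
        Q v = ∑ i, v i * (Bl.flip (Pi.single i 1)) v := by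
      intro v
      have h1 : Q v = Bl v v := (QuadraticMap.associated_eq_self_apply ℚ_[p] Q v).symm
      have h2' : v = ∑ i, v i • (Pi.single i 1 : Fin n → ℚ_[p]) := by
        funext j
        simp [Finset.sum_apply, Pi.single_apply, mul_ite]
      rw [h1]
      conv_lhs => rw [show Bl v v = Bl v (∑ i, v i • (Pi.single i 1 : Fin n → ℚ_[p])) by rw [← h2']]
      rw [map_sum]
      refine Finset.sum_congr rfl fun i _ => ?_
      rw [map_smul, smul_eq_mul, LinearMap.flip_apply]
    have : Continuous fun v : Fin n → ℚ_[p] =>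
        ∑ i, v i * (Bl.flip (Pi.single i 1)) v := by
      apply continuous_finset_sum
      intro i _
      exact (continuous_apply i).mul (Bl.flip (Pi.single i 1)).continuous_of_finiteDimensional
    exact this.congr fun v => (hQ v).symm
  have hBA : B ⊆ closure A := by
    rintro y ⟨v, rfl⟩
    rw [mem_closure_iff_seq_limit]
    -- for each i, approximate v i by integers
    have happrox : ∀ i, ∃ u : ℕ → ℤ, Filter.Tendsto (fun k => ((u k : ℤ_[p]) : ℚ_[p]))
        Filter.atTop (nhds ((v i : ℚ_[p]))) := by
      intro i
      have hd : v i ∈ closure (Set.range (Int.cast : ℤ → ℤ_[p])) :=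
        PadicInt.denseRange_intCast (v i)
      rw [mem_closure_iff_seq_limit] at hd
      obtain ⟨w, hw, hwt⟩ := hd
      choose u hu using hw
      refine ⟨u, ?_⟩
      have hcont : Continuous (fun x : ℤ_[p] => (x : ℚ_[p])) := continuous_subtype_val
      have := (hcont.tendsto (v i)).comp hwt
      simpa [Function.comp_def, hu] using this
    choose u hu using happrox
    refine ⟨fun k => Q (fun i => ((u i k : ℤ) : ℚ_[p])),
      fun k => ⟨fun i => u i k, by norm_cast⟩, ?_⟩
    have htend : Filter.Tendsto (fun k => fun i => ((u i k : ℤ) : ℚ_[p]))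
        Filter.atTop (nhds (fun i => (v i : ℚ_[p]))) := by
      rw [tendsto_pi_nhds]
      intro i
      have := hu i
      simpa using this
    exact ((hc.tendsto _).comp htend)
  exact dense_quot_iff hAB hBA
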